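/- Fix any vertex i of K_{M,M} and any exact pruning set Q. Let E(i) be the set consisting of the first M/2 edges incident to i that the greedy 2-approximation algorithm (Algorithm 1) adds to P (in order of addition), and let Q(i) be the set of edges of Q incident to i. Then the total weight of E(i) is at most the total weight of Q(i): Σ_{e ∈ E(i)} w(e) ≤ Σ_{e ∈ Q(i)} w(e). -/

import Mathlib

/-!
Setting: the complete bipartite graph `K_{M,M}`.  An edge is a pair
`(u, v) : Fin M × Fin M` joining left vertex `u` with right vertex `v`.
Edge weights are `w (u, v) = |W u v|` for an `M × M` real matrix `W`.
-/

/-- Number of edges of `P` incident to the left vertex `u`. -/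
def degL {M : ℕ} (P : Finset (Fin M × Fin M)) (u : Fin M) : ℕ :=
  (P.filter fun e => e.1 = u).card

/-- Number of edges of `P` incident to the right vertex `v`. -/
def degR {M : ℕ} (P : Finset (Fin M × Fin M)) (v : Fin M) : ℕ :=
  (P.filter fun e => e.2 = v).card

/-- One step of the greedy algorithm: add the edge `e = (u, v)` to the current set `P`
iff `u` is incident to fewer than `k` edges of `P` or `v` is incident to fewer than `k`
edges of `P`. -/
def greedyStep {M : ℕ} (k : ℕ) (P : Finset (Fin M × Fin M)) (e : Fin M × Fin M) :
    Finset (Fin M × Fin M) :=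
  if degL P e.1 < k ∨ degR P e.2 < k then insert e P else P

/-- The greedy 2-approximation algorithm (Algorithm 1): process the edges in the order
given by the list `L`, starting from `∅`. -/
def greedy {M : ℕ} (k : ℕ) (L : List (Fin M × Fin M)) : Finset (Fin M × Fin M) :=
  L.foldl (greedyStep k) ∅

/-- An exact pruning set: every left vertex and every right vertex is incident to
exactly `k` of its edges. -/
def IsExactPruning {M : ℕ} (k : ℕ) (Q : Finset (Fin M × Fin M)) : Prop :=
  (∀ u : Fin M, degL Q u = k) ∧ (∀ v : Fin M, degR Q v = k)

/-- A vertex of `K_{M,M}`: either a left vertex `Sum.inl u` or a right vertex `Sum.inr v`. -/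
def Inc {M : ℕ} : (Fin M ⊕ Fin M) → (Fin M × Fin M) → Prop
  | Sum.inl u, e => e.1 = u
  | Sum.inr v, e => e.2 = v

instance {M : ℕ} (x : Fin M ⊕ Fin M) (e : Fin M × Fin M) : Decidable (Inc x e) := by
  cases x
  · exact inferInstanceAs (Decidable (e.1 = _))
  · exact inferInstanceAs (Decidable (e.2 = _))

/-- The edges added to `P` by the greedy algorithm, listed in the order in which the
algorithm adds them (i.e. in the order of the enumeration `L`). -/
def addedList {M : ℕ} (k : ℕ) (L : List (Fin M × Fin M)) : List (Fin M × Fin M) :=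
  L.filter fun e => decide (e ∈ greedy k L)

/-- `E(x)`: the first `k` edges incident to the vertex `x` that the greedy algorithm adds
to `P`, in order of addition. -/
def firstEdges {M : ℕ} (k : ℕ) (L : List (Fin M × Fin M)) (x : Fin M ⊕ Fin M) :
    List (Fin M × Fin M) :=
  ((addedList k L).filter fun e => decide (Inc x e)).take k


section Aux

variable {M : ℕ}

lemma subset_foldl (k : ℕ) (L : List (Fin M × Fin M)) :
    ∀ P : Finset (Fin M × Fin M), P ⊆ L.foldl (greedyStep k) P := by
  induction L with
  | nil => intro P; simp
  | cons e L ih =>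
    intro P
    refine subset_trans ?_ (ih (greedyStep k P e))
    unfold greedyStep
    split
    · exact Finset.subset_insert _ _
    · exact subset_rfl

lemma foldl_subset (k : ℕ) (L : List (Fin M × Fin M)) :
    ∀ P : Finset (Fin M × Fin M), L.foldl (greedyStep k) P ⊆ P ∪ L.toFinset := by
  induction L with
  | nil => intro P; simp
  | cons e L ih =>
    intro P
    refine subset_trans (ih (greedyStep k P e)) ?_
    intro x hx
    rcases Finset.mem_union.1 hx with h | h
    · unfold greedyStep at h
      split at h
      · rcases Finset.mem_insert.1 h with rfl | h
        · simp
        · simp [h]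
      · simp [h]
    · simp [h]

lemma mem_greedy_of (k : ℕ) (i : Fin M ⊕ Fin M) (e : Fin M × Fin M)
    (L₁ L₂ : List (Fin M × Fin M))
    (hlen : (L₁.filter fun x => decide (Inc i x)).length < k)
    (hie : Inc i e) :
    e ∈ greedy k (L₁ ++ e :: L₂) := by
  unfold greedy
  rw [List.foldl_append, List.foldl_cons]
  have hP₁sub : L₁.foldl (greedyStep k) ∅ ⊆ L₁.toFinset := by
    have := foldl_subset k L₁ ∅; simpa using this
  set P₁ := L₁.foldl (greedyStep k) ∅ with hP₁
  have hcond : degL P₁ e.1 < k ∨ degR P₁ e.2 < k := by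
    cases i with
    | inl u =>
      left
      have hu : e.1 = u := hie
      subst hu
      have hsub : P₁.filter (fun x => x.1 = e.1) ⊆ L₁.toFinset.filter (fun x => x.1 = e.1) :=
        Finset.filter_subset_filter _ hP₁sub
      have h1 : L₁.toFinset.filter (fun x => x.1 = e.1)
          = (L₁.filter fun x => decide (Inc (Sum.inl e.1) x)).toFinset := by
        ext x
        simp [Inc]
        exact fun _ => ⟨fun h => decide_eq_true h, fun h => of_decide_eq_true h⟩
      calc degL P₁ e.1 = (P₁.filter fun x => x.1 = e.1).card := rfl
        _ ≤ (L₁.toFinset.filter fun x => x.1 = e.1).card := Finset.card_le_card hsub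
        _ = (L₁.filter fun x => decide (Inc (Sum.inl e.1) x)).toFinset.card := by rw [h1]
        _ ≤ (L₁.filter fun x => decide (Inc (Sum.inl e.1) x)).length :=
            List.toFinset_card_le _
        _ < k := hlen
    | inr v =>
      right
      have hv : e.2 = v := hie
      subst hv
      have hsub : P₁.filter (fun x => x.2 = e.2) ⊆ L₁.toFinset.filter (fun x => x.2 = e.2) :=
        Finset.filter_subset_filter _ hP₁sub
      have h1 : L₁.toFinset.filter (fun x => x.2 = e.2)
          = (L₁.filter fun x => decide (Inc (Sum.inr e.2) x)).toFinset := by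
        ext x
        simp [Inc]
        exact fun _ => ⟨fun h => decide_eq_true h, fun h => of_decide_eq_true h⟩
      calc degR P₁ e.2 = (P₁.filter fun x => x.2 = e.2).card := rfl
        _ ≤ (L₁.toFinset.filter fun x => x.2 = e.2).card := Finset.card_le_card hsub
        _ = (L₁.filter fun x => decide (Inc (Sum.inr e.2) x)).toFinset.card := by rw [h1]
        _ ≤ (L₁.filter fun x => decide (Inc (Sum.inr e.2) x)).length :=
            List.toFinset_card_le _
        _ < k := hlen
  have hstep : greedyStep k P₁ e = insert e P₁ := by
    unfold greedyStep; rw [if_pos hcond]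
  rw [hstep]
  exact subset_foldl k L₂ _ (Finset.mem_insert_self e P₁)

lemma mem_greedy_take (k : ℕ) (i : Fin M ⊕ Fin M) (L : List (Fin M × Fin M))
    (hnodup : L.Nodup) :
    ∀ e ∈ (L.filter fun x => decide (Inc i x)).take k, e ∈ greedy k L := by
  intro e he
  have helfi : e ∈ L.filter fun x => decide (Inc i x) := List.mem_of_mem_take he
  have heL : e ∈ L := List.mem_of_mem_filter helfi
  have hpe : Inc i e := by have := List.of_mem_filter helfi; simpa using this
  obtain ⟨L₁, L₂, rfl⟩ := List.append_of_mem heL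
  have hnodupf : (((L₁ ++ e :: L₂)).filter fun x => decide (Inc i x)).Nodup :=
    hnodup.filter _
  have hsplit : ((L₁ ++ e :: L₂).filter fun x => decide (Inc i x))
      = (L₁.filter fun x => decide (Inc i x)) ++ e :: (L₂.filter fun x => decide (Inc i x)) := by
    rw [List.filter_append, List.filter_cons, if_pos (by simpa using hpe)]
  have hlen : (L₁.filter fun x => decide (Inc i x)).length < k := by
    by_contra hle
    push_neg at hle
    have htake : ((L₁ ++ e :: L₂).filter fun x => decide (Inc i x)).take k
        = (L₁.filter fun x => decide (Inc i x)).take k := by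
      rw [hsplit, List.take_append, Nat.sub_eq_zero_of_le hle,
        List.take_zero, List.append_nil]
    have heL₁ : e ∈ L₁.filter fun x => decide (Inc i x) :=
      List.mem_of_mem_take (htake ▸ he)
    rw [hsplit] at hnodupf
    have : e ∉ L₁.filter fun x => decide (Inc i x) := by
      have hd := (List.nodup_append'.mp hnodupf).2.2
      intro hc
      exact hd hc List.mem_cons_self
    exact this heL₁
  exact mem_greedy_of k i e L₁ L₂ hlen hpe

lemma take_filter_eq {α : Type*} (q : α → Bool) (k : ℕ) (l : List α)
    (h : ∀ a ∈ l.take k, q a = true) :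
    (l.filter q).take k = l.take k := by
  conv_lhs => rw [← List.take_append_drop k l]
  rw [List.filter_append, List.filter_eq_self.mpr h]
  by_cases hk : k ≤ l.length
  · rw [List.take_append, List.length_take,
      Nat.min_eq_left hk, Nat.sub_self, List.take_zero, List.append_nil,
      List.take_take, Nat.min_self]
  · push_neg at hk
    rw [List.drop_eq_nil_of_le (le_of_lt hk)]
    simp [List.take_take]

lemma sum_take_le {α : Type*} [DecidableEq α] (w : α → ℝ) :
    ∀ (l : List α) (k : ℕ) (S : Finset α),
      l.Pairwise (fun a b => w a ≤ w b) → l.Nodup →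
      (∀ x ∈ S, x ∈ l) → S.card = k →
      ((l.take k).map w).sum ≤ ∑ e ∈ S, w e := by
  intro l
  induction l with
  | nil =>
    intro k S _ _ hsub hcard
    have hS : S = ∅ := Finset.eq_empty_of_forall_notMem (fun x hx => by simpa using hsub x hx)
    simp [hS]
  | cons a l ih =>
    intro k S hsorted hnodup hsub hcard
    cases k with
    | zero =>
      have hS : S = ∅ := Finset.card_eq_zero.mp hcard
      simp [hS]
    | succ k =>
      rw [List.take_succ_cons, List.map_cons, List.sum_cons]
      have hsl : l.Pairwise (fun a b => w a ≤ w b) := hsorted.of_cons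
      have hnl : l.Nodup := hnodup.of_cons
      have hanl : a ∉ l := (List.nodup_cons.mp hnodup).1
      by_cases ha : a ∈ S
      · have hins : ∑ e ∈ S, w e = w a + ∑ e ∈ S.erase a, w e :=
          (Finset.add_sum_erase S w ha).symm
        rw [hins]
        refine add_le_add_right (ih k (S.erase a) hsl hnl ?_ ?_) _
        · intro x hx
          have hxS := Finset.mem_of_mem_erase hx
          have hxa := Finset.ne_of_mem_erase hx
          rcases List.mem_cons.mp (hsub x hxS) with h | h
          · exact absurd h hxa
          · exact h
        · simp [Finset.card_erase_of_mem ha, hcard]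
      · have hsub' : ∀ x ∈ S, x ∈ l := by
          intro x hx
          rcases List.mem_cons.mp (hsub x hx) with h | h
          · exact absurd (h ▸ hx) ha
          · exact h
        have hne : S.Nonempty := Finset.card_pos.mp (by rw [hcard]; exact Nat.succ_pos k)
        obtain ⟨b, hb⟩ := hne
        have hab : w a ≤ w b := (List.rel_of_pairwise_cons hsorted) (hsub' b hb)
        have hins : ∑ e ∈ S, w e = w b + ∑ e ∈ S.erase b, w e :=
          (Finset.add_sum_erase S w hb).symm
        rw [hins]
        exact add_le_add hab (ih k (S.erase b) hsl hnl
          (fun x hx => hsub' x (Finset.mem_of_mem_erase hx))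
          (by simp [Finset.card_erase_of_mem hb, hcard]))

end Aux

/-- Fix a vertex `i` of `K_{M,M}` and an exact pruning set `Q`.  Let
`E(i)` be the list of the first `M/2` edges incident to `i` that the greedy algorithm adds
to `P` (in order of addition), and let `Q(i)` be the set of edges of `Q` incident to `i`.
Then the total weight of `E(i)` is at most the total weight of `Q(i)`. -/

theorem greedy_sum_le (M : ℕ) (hM : 0 < M) (hMeven : Even M)
    (W : Matrix (Fin M) (Fin M) ℝ) (w : Fin M × Fin M → ℝ)
    (hw : ∀ e : Fin M × Fin M, w e = |W e.1 e.2|)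
    (L : List (Fin M × Fin M)) (hnodup : L.Nodup)
    (hcomplete : ∀ e : Fin M × Fin M, e ∈ L)
    (hsorted : L.Pairwise fun a b => w a ≤ w b)
    (i : Fin M ⊕ Fin M)
    (Q : Finset (Fin M × Fin M)) (hQ : IsExactPruning (M / 2) Q) :
    ((firstEdges (M / 2) L i).map w).sum ≤ ∑ e ∈ Q.filter (fun e => Inc i e), w e := by
  classical
  set k := M / 2 with hk
  have hfe : firstEdges k L i = (L.filter fun x => decide (Inc i x)).take k := by
    unfold firstEdges addedList
    have hcomm : ((L.filter fun e => decide (e ∈ greedy k L)).filter fun e => decide (Inc i e))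
        = ((L.filter fun e => decide (Inc i e)).filter fun e => decide (e ∈ greedy k L)) := by
      rw [List.filter_filter, List.filter_filter]
      exact List.filter_congr fun a _ => Bool.and_comm _ _
    rw [hcomm]
    exact take_filter_eq _ k _ (fun a ha => by
      simpa using mem_greedy_take k i L hnodup a ha)
  rw [hfe]
  have hcard : (Q.filter fun e => Inc i e).card = k := by
    cases i with
    | inl u =>
      have : (Q.filter fun e => Inc (Sum.inl u) e) = Q.filter fun e => e.1 = u :=
        Finset.filter_congr (fun e _ => by simp [Inc])
      rw [this]
      exact hQ.1 u
    | inr v =>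
      have : (Q.filter fun e => Inc (Sum.inr v) e) = Q.filter fun e => e.2 = v :=
        Finset.filter_congr (fun e _ => by simp [Inc])
      rw [this]
      exact hQ.2 v
  refine sum_take_le w _ k _ ?_ (hnodup.filter _) ?_ hcard
  · exact List.Pairwise.filter _ hsorted
  · intro x hx
    rw [Finset.mem_filter] at hx
    rw [List.mem_filter]
    exact ⟨hcomplete x, by simpa using hx.2⟩
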